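/- Let u : ℕ → ℝ with u ∈ Λ and suppose Δ_u ≠ ∅. Then the least element of Δ_u belongs to Argmax(u) and equals the least element of Argmax(u); that is, min Δ_u = min Argmax(u). -/
import Mathlib


open Set Filter

/-- `V u` is the supremum of the sequence `u` (real `sSup`, junk value if unbounded). -/
noncomputable def V (u : ℕ → ℝ) : ℝ := sSup (Set.range u)

/-- `L u` is the limit superior of `u` taken in the extended reals. -/
noncomputable def L (u : ℕ → ℝ) : EReal :=
  Filter.limsup (fun n => ((u n : ℝ) : EReal)) Filter.atTop

/-- `u ∈ Λ` : the supremum of `u` is finite, i.e. `u` is bounded above. -/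
def MemLambda (u : ℕ → ℝ) : Prop := BddAbove (Set.range u)

/-- `Δ_u = {k : max_{0 ≤ j ≤ k} u_j ≥ sup_{j > k} u_j}`. -/
noncomputable def Delta (u : ℕ → ℝ) : Set ℕ :=
  {k | sSup (u '' Set.Ioi k) ≤ sSup (u '' Set.Iic k)}

/-- `Δˢ_u = {k : max_{0 ≤ j ≤ k} u_j > sup_{j > k} u_j}`. -/
noncomputable def DeltaS (u : ℕ → ℝ) : Set ℕ :=
  {k | sSup (u '' Set.Ioi k) < sSup (u '' Set.Iic k)}

/-- `Argmax u = {k : u k = V u}`. -/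
noncomputable def Argmax (u : ℕ → ℝ) : Set ℕ := {k | u k = V u}


/-- for u ∈ Λ with Δ_u ≠ ∅, the least element of Δ_u belongs to Argmax u
and equals the least element of Argmax u. -/
theorem sInf_delta_eq_sInf_argmax (u : ℕ → ℝ) (hu : MemLambda u)
    (hne : (Delta u).Nonempty) :
    sInf (Delta u) ∈ Argmax u ∧ sInf (Delta u) = sInf (Argmax u) := by
  set k := sInf (Delta u) with hk
  have hkD : k ∈ Delta u := Nat.sInf_mem hne
  have hbdd : ∀ s : Set ℕ, BddAbove (u '' s) :=
    fun s => hu.mono (Set.image_subset_range u s)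
  have hfin : (u '' Set.Iic k).Finite := (Set.finite_Iic k).image u
  have hne1 : (u '' Set.Iic k).Nonempty := Set.nonempty_Iic.image u
  obtain ⟨j, hjk, hj⟩ := hne1.csSup_mem hfin
  have hsplit : Set.range u = u '' Set.Iic k ∪ u '' Set.Ioi k := by
    rw [← Set.image_union, Set.Iic_union_Ioi, Set.image_univ]
  have hV : V u = sSup (u '' Set.Iic k) := by
    rw [V, hsplit, csSup_union (hbdd _) hne1 (hbdd _) (Set.nonempty_Ioi.image u)]
    exact max_eq_left hkD
  have hjA : j ∈ Argmax u := by rw [Argmax, Set.mem_setOf_eq, hV, hj]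
  have hAne : (Argmax u).Nonempty := ⟨j, hjA⟩
  have hmA : sInf (Argmax u) ∈ Argmax u := Nat.sInf_mem hAne
  set m := sInf (Argmax u) with hm
  have hmk : m ≤ k := le_trans (Nat.sInf_le hjA) hjk
  have hum : u m = V u := hmA
  have hmD : m ∈ Delta u := by
    have h1 : sSup (u '' Set.Ioi m) ≤ u m := by
      apply csSup_le (Set.nonempty_Ioi.image u)
      rintro x ⟨i, _, rfl⟩
      rw [hum]
      exact le_csSup hu (Set.mem_range_self i)
    have h2 : u m ≤ sSup (u '' Set.Iic m) :=
      le_csSup (hbdd _) ⟨m, Set.self_mem_Iic, rfl⟩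
    exact le_trans h1 h2
  have hkm : k ≤ m := Nat.sInf_le hmD
  have : k = m := le_antisymm hkm hmk
  exact ⟨this ▸ hmA, this⟩
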